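/- Let n ≥ 4 and let ℋ be a generic n × n half-grid in ℝ², given by sets {a₀ < a₁ < ⋯ < a_{n−1}} and {b₀ < b₁ < ⋯ < b_{n−1}} as ℋ = {(aᵢ, bⱼ) : i + j ≤ n − 1}, with vertex V = (a₀, b₀); here generic means every line in ℝ² that is not parallel to the x-axis or y-axis passes through at most 2 points of ℋ. Then for every positive integer k there exists a finite multiset of at most (3nk)/2 + k/2 lines in ℝ², none of which passes through V, that covers every point of ℋ ∖ {V} at least k times. -/
import Mathlib


open scoped Classical

/-- `IsOnLine l p` means that the point `p : ℝ × ℝ` lies on the line with coefficient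
triple `l = (u, v, c)`, i.e. on `{(x, y) | u * x + v * y = c}`. -/
def IsOnLine (l : ℝ × ℝ × ℝ) (p : ℝ × ℝ) : Prop :=
  l.1 * p.1 + l.2.1 * p.2 = l.2.2

private lemma count_ge_aux {α : Type*} (pred : α → Prop) [DecidablePred pred]
    (s : Finset ℕ) (f : ℕ → α) (i : ℕ) (hi : i ∈ s) (h : pred (f i)) (k : ℕ) :
    k ≤ (s.val.bind (fun a => Multiset.replicate k (f a))).countP pred := by
  have h1 : Multiset.replicate k (f i) ≤ s.val.bind (fun a => Multiset.replicate k (f a)) :=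
    Multiset.le_bind s.val hi
  have h2 := Multiset.countP_le_of_le pred h1
  rwa [Multiset.countP_eq_card_filter, Multiset.filter_eq_self.2
    (fun x hx => by rwa [Multiset.eq_of_mem_replicate hx]), Multiset.card_replicate] at h2

private lemma card_bind_replicate {α : Type*} (s : Finset ℕ) (f : ℕ → α) (k : ℕ) :
    Multiset.card (s.val.bind (fun a => Multiset.replicate k (f a))) = s.card * k := by
  rw [Multiset.card_bind]
  have : Multiset.map (Multiset.card ∘ fun a => Multiset.replicate k (f a)) s.val
      = Multiset.replicate s.card k := by
    rw [Multiset.eq_replicate]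
    constructor
    · simp
    · intro x hx
      simp only [Multiset.mem_map] at hx
      obtain ⟨y, _, hy⟩ := hx
      simp [← hy]
  rw [this, Multiset.sum_replicate, smul_eq_mul]

theorem stmt_4 (n : ℕ) (hn : 4 ≤ n) (a b : ℕ → ℝ)
    -- a₀ < a₁ < ⋯ < a_{n-1} and b₀ < b₁ < ⋯ < b_{n-1}
    (ha : ∀ i j : ℕ, i < j → j < n → a i < a j)
    (hb : ∀ i j : ℕ, i < j → j < n → b i < b j)
    -- the n × n half-grid ℋ = {(aᵢ, bⱼ) : i + j ≤ n - 1}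
    (H : Finset (ℝ × ℝ))
    (hH : H = ((Finset.range n ×ˢ Finset.range n).filter
      (fun q => q.1 + q.2 ≤ n - 1)).image (fun q => (a q.1, b q.2)))
    -- genericity: every line not parallel to the x-axis or y-axis passes through
    -- at most 2 points of ℋ
    (hgen : ∀ u v c : ℝ, u ≠ 0 → v ≠ 0 →
      (H.filter (fun p => u * p.1 + v * p.2 = c)).card ≤ 2)
    (k : ℕ) (hk : 0 < k) :
    ∃ L : Multiset (ℝ × ℝ × ℝ),
      (∀ l ∈ L, (l.1, l.2.1) ≠ ((0 : ℝ), (0 : ℝ))) ∧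
      -- no line of L passes through the vertex V = (a₀, b₀)
      (∀ l ∈ L, ¬ IsOnLine l (a 0, b 0)) ∧
      -- L has at most (3nk)/2 + k/2 lines
      (Multiset.card L : ℝ) ≤ 3 * (n : ℝ) * (k : ℝ) / 2 + (k : ℝ) / 2 ∧
      -- L covers every point of ℋ ∖ {V} at least k times
      (∀ p ∈ H, p ≠ (a 0, b 0) → k ≤ L.countP (fun l => IsOnLine l p)) := by
  set m : ℕ := n / 2 with hm
  -- the three families of lines
  set vert : ℕ → ℝ × ℝ × ℝ := fun i => ((1 : ℝ), (0 : ℝ), a i) with hvert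
  set horiz : ℕ → ℝ × ℝ × ℝ := fun j => ((0 : ℝ), (1 : ℝ), b j) with hhoriz
  set slant : ℕ → ℝ × ℝ × ℝ :=
    fun j => (b j - b 0, a j - a 0, (b j - b 0) * a 0 + (a j - a 0) * b j) with hslant
  set L : Multiset (ℝ × ℝ × ℝ) :=
    ((Finset.Icc 1 m).val.bind (fun i => Multiset.replicate k (vert i))) +
    ((Finset.Icc 1 m).val.bind (fun j => Multiset.replicate k (horiz j))) +
    ((Finset.Icc (m + 1) (n - 1)).val.bind (fun j => Multiset.replicate k (slant j))) with hL
  have hm_lt : m < n := Nat.div_lt_self (by omega) (by norm_num)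
  have hmem : ∀ l ∈ L, (∃ i, 1 ≤ i ∧ i ≤ m ∧ l = vert i) ∨
      (∃ j, 1 ≤ j ∧ j ≤ m ∧ l = horiz j) ∨
      (∃ j, m + 1 ≤ j ∧ j ≤ n - 1 ∧ l = slant j) := by
    intro l hl
    rw [hL] at hl
    simp only [Multiset.mem_add, Multiset.mem_bind, Finset.mem_val, Finset.mem_Icc] at hl
    rcases hl with (⟨i, hi, h⟩ | ⟨j, hj, h⟩) | ⟨j, hj, h⟩
    · exact Or.inl ⟨i, hi.1, hi.2, Multiset.eq_of_mem_replicate h⟩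
    · exact Or.inr (Or.inl ⟨j, hj.1, hj.2, Multiset.eq_of_mem_replicate h⟩)
    · exact Or.inr (Or.inr ⟨j, hj.1, hj.2, Multiset.eq_of_mem_replicate h⟩)
  have hbpos : ∀ j, 1 ≤ j → j ≤ n - 1 → b 0 < b j := fun j h1 h2 => hb 0 j h1 (by omega)
  have hapos : ∀ j, 1 ≤ j → j ≤ n - 1 → a 0 < a j := fun j h1 h2 => ha 0 j h1 (by omega)
  refine ⟨L, ?_, ?_, ?_, ?_⟩
  · -- nondegenerate
    intro l hl
    rcases hmem l hl with ⟨i, h1, h2, rfl⟩ | ⟨j, h1, h2, rfl⟩ | ⟨j, h1, h2, rfl⟩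
    · simp [hvert]
    · simp [hhoriz]
    · have := hbpos j (by omega) h2
      intro h
      have h' : b j - b 0 = 0 := congrArg Prod.fst h
      linarith
  · -- avoids V
    intro l hl
    rcases hmem l hl with ⟨i, h1, h2, rfl⟩ | ⟨j, h1, h2, rfl⟩ | ⟨j, h1, h2, rfl⟩
    · have := hapos i h1 (by omega)
      simp only [IsOnLine, hvert]; intro h; simp at h; linarith
    · have := hbpos j h1 (by omega)
      simp only [IsOnLine, hhoriz]; intro h; simp at h; linarith
    · have h3 := hbpos j (by omega) h2
      have h4 := hapos j (by omega) h2
      simp only [IsOnLine, hslant]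
      intro h
      have : (a j - a 0) * b 0 = (a j - a 0) * b j := by linarith
      have := mul_left_cancel₀ (by linarith : a j - a 0 ≠ 0) this
      linarith
  · -- cardinality bound
    rw [hL]
    simp only [Multiset.card_add, card_bind_replicate, Nat.card_Icc]
    have hcard : (m + 1 - 1) * k + (m + 1 - 1) * k + (n - 1 + 1 - (m + 1)) * k
        = (m + n - 1) * k := by
      have h1 : m + 1 ≤ n - 1 := by omega
      have h2 : m + 1 - 1 = m := by omega
      rw [h2]
      have : n - 1 + 1 - (m + 1) = n - 1 - m := by omega
      rw [this, ← Nat.add_mul, ← Nat.add_mul]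
      congr 1
      omega
    rw [hcard]
    have hmn : ((m + n - 1 : ℕ) : ℝ) ≤ 3 * (n : ℝ) / 2 + 1 / 2 := by
      have h1 : 2 * m ≤ n := by omega
      have : ((m + n - 1 : ℕ) : ℝ) = (m : ℝ) + (n : ℝ) - 1 := by
        push_cast [Nat.cast_sub (by omega : 1 ≤ m + n)]; ring
      rw [this]
      have h2 : (m : ℝ) ≤ (n : ℝ) / 2 := by
        have : (2 : ℝ) * m ≤ n := by exact_mod_cast Nat.cast_le.2 (by omega : 2 * m ≤ n)
        linarith
      linarith
    push_cast
    calc ((m + n - 1 : ℕ) : ℝ) * k ≤ (3 * (n : ℝ) / 2 + 1 / 2) * k := by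
          apply mul_le_mul_of_nonneg_right hmn (by positivity)
      _ = 3 * (n : ℝ) * k / 2 + (k : ℝ) / 2 := by ring
  · -- coverage
    intro p hp hpV
    rw [hH] at hp
    simp only [Finset.mem_image, Finset.mem_filter, Finset.mem_product, Finset.mem_range] at hp
    obtain ⟨⟨i, j⟩, ⟨⟨hi, hj⟩, hij⟩, rfl⟩ := hp
    simp only at hij ⊢
    have hij0 : ¬(i = 0 ∧ j = 0) := by
      rintro ⟨rfl, rfl⟩; exact hpV rfl
    -- decide which family covers the point
    rw [hL]
    by_cases hiv : 1 ≤ i ∧ i ≤ m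
    · -- vertical line x = a i
      refine le_trans ?_ (Multiset.countP_le_of_le _ (Multiset.le_add_right _ _))
      refine le_trans ?_ (Multiset.countP_le_of_le _ (Multiset.le_add_right _ _))
      exact count_ge_aux _ _ _ i (Finset.mem_Icc.2 hiv) (by simp [IsOnLine, hvert]) k
    · by_cases hjh : 1 ≤ j ∧ j ≤ m
      · -- horizontal line y = b j
        refine le_trans ?_ (Multiset.countP_le_of_le _ (Multiset.le_add_right _ _))
        refine le_trans ?_ (Multiset.countP_le_of_le _ (Multiset.le_add_left _ _))
        exact count_ge_aux _ _ _ j (Finset.mem_Icc.2 hjh) (by simp [IsOnLine, hhoriz]) k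
      · -- slanted line
        have h2m : n ≤ 2 * m + 1 := by omega
        have hcase : (i = 0 ∧ m + 1 ≤ j ∧ j ≤ n - 1) ∨ (j = 0 ∧ m + 1 ≤ i ∧ i ≤ n - 1) := by
          omega
        refine le_trans ?_ (Multiset.countP_le_of_le _ (Multiset.le_add_left _ _))
        rcases hcase with ⟨rfl, h1, h2⟩ | ⟨rfl, h1, h2⟩
        · exact count_ge_aux _ _ _ j (Finset.mem_Icc.2 ⟨h1, h2⟩)
            (by simp [IsOnLine, hslant]) k
        · refine count_ge_aux _ _ _ i (Finset.mem_Icc.2 ⟨h1, h2⟩) ?_ k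
          simp only [IsOnLine, hslant]
          ring
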